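/- Let Λ be a finite-dimensional algebra over a field k and let E/k be a field extension. Then Λ is self-injective (i.e., Λ is injective as a left module over itself) if and only if the E-algebra Λ ⊗_k E is self-injective. -/

import Mathlib

open TensorProduct

noncomputable section

section Coind
variable (F B : Type) [Field F] [Ring B] [Algebra F B]
def Coind : Type := B →ₗ[F] F
namespace Coind
variable {F B}
def mk' (f : B →ₗ[F] F) : Coind F B := f
def toLin (f : Coind F B) : B →ₗ[F] F := f
@[ext] lemma ext {f g : Coind F B} (h : ∀ x, toLin f x = toLin g x) : f = g :=
  LinearMap.ext h
instance : AddCommGroup (Coind F B) := inferInstanceAs (AddCommGroup (B →ₗ[F] F))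
@[simp] lemma toLin_add (f g : Coind F B) : toLin (f + g) = toLin f + toLin g := rfl
@[simp] lemma toLin_zero : toLin (0 : Coind F B) = 0 := rfl
@[simp] lemma toLin_mk' (f : B →ₗ[F] F) : toLin (mk' f) = f := rfl
instance : SMul B (Coind F B) :=
  ⟨fun b f => mk' ((toLin f).comp (LinearMap.mulRight F b))⟩
@[simp] lemma smul_ap (b : B) (f : Coind F B) (x : B) :
    toLin (b • f) x = toLin f (x * b) := rfl
instance : Module B (Coind F B) where
  one_smul f := by ext x; simp
  mul_smul a b f := by ext x; simp [mul_assoc]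
  smul_zero b := by ext x; simp
  smul_add b f g := by ext x; simp
  add_smul a b f := by ext x; simp [mul_add]
  zero_smul f := by ext x; simp

lemma toLin_algsmul (κ : F) (g : Coind F B) :
    toLin ((algebraMap F B κ) • g) = κ • toLin g := by
  ext x
  rw [smul_ap, LinearMap.smul_apply, ← Algebra.commutes κ x, ← Algebra.smul_def,
    (toLin g).map_smul]

lemma toLin_sum {ι : Type} (s : Finset ι) (v : ι → Coind F B) :
    toLin (∑ i ∈ s, v i) = ∑ i ∈ s, toLin (v i) :=
  map_sum (AddMonoidHom.mk' toLin toLin_add) v s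

/-- The coinduced module is "injective": extension along any injection exists. -/
theorem extension_property
    {X Y : Type} [AddCommGroup X] [AddCommGroup Y] [Module B X] [Module B Y]
    (i : X →ₗ[B] Y) (hi : Function.Injective i) (g : X →ₗ[B] Coind F B) :
    ∃ h : Y →ₗ[B] Coind F B, ∀ x, h (i x) = g x := by
  letI mX : Module F X := Module.compHom X (algebraMap F B)
  letI mY : Module F Y := Module.compHom Y (algebraMap F B)
  have hsX : ∀ (f : F) (x : X), f • x = (algebraMap F B f) • x := fun _ _ => rfl
  have hsY : ∀ (f : F) (y : Y), f • y = (algebraMap F B f) • y := fun _ _ => rfl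
  let iF : X →ₗ[F] Y :=
    { toFun := i
      map_add' := i.map_add
      map_smul' := fun f x => by simp only [RingHom.id_apply, hsX, hsY, i.map_smul] }
  have hker : LinearMap.ker iF = ⊥ := by
    rw [LinearMap.ker_eq_bot]; exact hi
  obtain ⟨l, hl⟩ := iF.exists_leftInverse_of_injective hker
  have hlx : ∀ x : X, l (i x) = x := fun x => congrArg (fun φ => φ x) hl
  let gh : X →ₗ[F] F :=
    { toFun := fun x => toLin (g x) 1
      map_add' := fun x y => by show toLin (g (x + y)) 1 = _; rw [g.map_add]; simp
      map_smul' := fun f x => by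
        show toLin (g (f • x)) 1 = f • toLin (g x) 1
        rw [hsX, g.map_smul, smul_ap, one_mul,
          Algebra.algebraMap_eq_smul_one, map_smul, smul_eq_mul] }
  let yh : Y →ₗ[F] F := gh.comp l
  let h : Y →ₗ[B] Coind F B :=
    { toFun := fun y => mk'
        { toFun := fun b => yh (b • y)
          map_add' := fun b c => by show yh ((b + c) • y) = _; rw [add_smul, map_add]
          map_smul' := fun f b => by
            show yh ((f • b) • y) = f • yh (b • y)
            rw [Algebra.smul_def, mul_smul, ← hsY, map_smul] }
      map_add' := fun y z => by ext b; show yh (b • (y + z)) = _; simp [smul_add]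
      map_smul' := fun c y => by
        ext b
        show yh (b • c • y) = toLin (c • mk' _) b
        rw [smul_ap, toLin_mk']
        show yh (b • c • y) = yh ((b * c) • y)
        rw [mul_smul] }
  refine ⟨h, fun x => ?_⟩
  ext b
  show yh (b • i x) = toLin (g x) b
  have e1 : b • i x = iF (b • x) := (i.map_smul b x).symm
  rw [e1]
  show gh (l (iF (b • x))) = toLin (g x) b
  have : l (iF (b • x)) = b • x := congrArg (fun φ => φ (b • x)) hl
  rw [this]
  show toLin (g (b • x)) 1 = toLin (g x) b
  rw [g.map_smul, smul_ap, one_mul]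

end Coind

/-- If `B` is self-injective, then `B` is a direct summand of a finite power of the
coinduced module. -/
theorem exists_summand [FiniteDimensional F B] (inj : Module.Injective B B) :
    ∃ (n : ℕ) (ι : B →ₗ[B] (Fin n → Coind F B)) (ρ : (Fin n → Coind F B) →ₗ[B] B),
      ∀ z, ρ (ι z) = z := by
  classical
  let bs := Module.finBasis F B
  let n := Module.finrank F B
  let ι : B →ₗ[B] (Fin n → Coind F B) :=
    LinearMap.pi fun j => LinearMap.toSpanSingleton B (Coind F B) (Coind.mk' (bs.coord j))
  have hι : Function.Injective ι := by
    rw [← LinearMap.ker_eq_bot, LinearMap.ker_eq_bot']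
    intro z hz
    have h1 : ∀ j, Coind.toLin (z • Coind.mk' (bs.coord j)) 1 = 0 := by
      intro j
      have h : ι z j = (0 : Fin n → Coind F B) j := congrFun hz j
      have h' : z • Coind.mk' (bs.coord j) = 0 := by
        simpa [ι, LinearMap.pi_apply, LinearMap.toSpanSingleton_apply] using h
      rw [h']; simp
    have h2 : ∀ j, bs.coord j z = 0 := by
      intro j
      have := h1 j
      rwa [Coind.smul_ap, Coind.toLin_mk', one_mul] at this
    exact (bs.forall_coord_eq_zero_iff).mp h2
  obtain ⟨ρ, hρ⟩ := inj.out ι hι LinearMap.id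
  exact ⟨n, ι, ρ, fun z => by simpa using hρ z⟩

end Coind

section Summand
variable {F B : Type} [Field F] [Ring B] [Algebra F B]

theorem injective_of_summand {n : ℕ} (ι : B →ₗ[B] (Fin n → Coind F B))
    (ρ : (Fin n → Coind F B) →ₗ[B] B) (hρι : ∀ z, ρ (ι z) = z) :
    Module.Injective B B := by
  constructor
  intro X Y _ _ _ _ f hf g
  have comp : ∀ j : Fin n, ∃ h : Y →ₗ[B] Coind F B,
      ∀ x, h (f x) = (LinearMap.proj j : (Fin n → Coind F B) →ₗ[B] Coind F B) (ι (g x)) :=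
    fun j => Coind.extension_property f hf
      (((LinearMap.proj j : (Fin n → Coind F B) →ₗ[B] Coind F B).comp ι).comp g)
  choose h hh using comp
  refine ⟨ρ.comp (LinearMap.pi h), fun x => ?_⟩
  have : (LinearMap.pi h) (f x) = ι (g x) := by
    funext j
    exact hh j x
  simp only [LinearMap.comp_apply, this, hρι]

end Summand

theorem injective_down
    {k E Λ : Type} [Field k] [Field E] [Algebra k E] [Ring Λ] [Algebra k Λ]
    (inj : Module.Injective (Λ ⊗[k] E) (Λ ⊗[k] E)) : Module.Injective Λ Λ := by
  constructor
  intro X Y _ _ _ _ f hf g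
  letI mX : Module k X := Module.compHom X (algebraMap k Λ)
  letI mY : Module k Y := Module.compHom Y (algebraMap k Λ)
  haveI tX : IsScalarTower k Λ X := ⟨fun c a x => by
    show (c • a) • x = (algebraMap k Λ c) • (a • x)
    rw [Algebra.smul_def, mul_smul]⟩
  haveI tY : IsScalarTower k Λ Y := ⟨fun c a y => by
    show (c • a) • y = (algebraMap k Λ c) • (a • y)
    rw [Algebra.smul_def, mul_smul]⟩
  haveI scX : SMulCommClass Λ k X := ⟨fun a c x => by
    show a • (algebraMap k Λ c) • x = (algebraMap k Λ c) • (a • x)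
    rw [← mul_smul, ← Algebra.commutes c a, mul_smul]⟩
  haveI scY : SMulCommClass Λ k Y := ⟨fun a c y => by
    show a • (algebraMap k Λ c) • y = (algebraMap k Λ c) • (a • y)
    rw [← mul_smul, ← Algebra.commutes c a, mul_smul]⟩
  let aX : Λ →ₐ[k] Module.End k (X ⊗[k] E) :=
    { toFun := fun a => (DistribMulAction.toLinearMap k X a).rTensor E
      map_one' := by
        show (DistribMulAction.toLinearMap k X (1 : Λ)).rTensor E = 1
        rw [show DistribMulAction.toLinearMap k X (1 : Λ) = LinearMap.id from
          LinearMap.ext fun x => one_smul Λ x, LinearMap.rTensor_id]; rfl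
      map_mul' := fun a b => by
        show (DistribMulAction.toLinearMap k X (a * b)).rTensor E =
          (DistribMulAction.toLinearMap k X a).rTensor E *
            (DistribMulAction.toLinearMap k X b).rTensor E
        rw [show DistribMulAction.toLinearMap k X (a * b) =
          (DistribMulAction.toLinearMap k X a).comp (DistribMulAction.toLinearMap k X b) from
          LinearMap.ext fun x => mul_smul a b x, LinearMap.rTensor_comp]; rfl
      map_zero' := by
        show (DistribMulAction.toLinearMap k X (0 : Λ)).rTensor E = 0
        rw [show DistribMulAction.toLinearMap k X (0 : Λ) = 0 from
          LinearMap.ext fun x => zero_smul Λ x, LinearMap.rTensor_zero]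
      map_add' := fun a b => by
        show (DistribMulAction.toLinearMap k X (a + b)).rTensor E =
          (DistribMulAction.toLinearMap k X a).rTensor E +
            (DistribMulAction.toLinearMap k X b).rTensor E
        rw [show DistribMulAction.toLinearMap k X (a + b) =
          DistribMulAction.toLinearMap k X a + DistribMulAction.toLinearMap k X b from
          LinearMap.ext fun x => add_smul a b x, LinearMap.rTensor_add]
      commutes' := fun c => by
        show (DistribMulAction.toLinearMap k X (algebraMap k Λ c)).rTensor E =
          algebraMap k (Module.End k (X ⊗[k] E)) c
        rw [show DistribMulAction.toLinearMap k X (algebraMap k Λ c) =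
          c • (LinearMap.id : X →ₗ[k] X) from
          LinearMap.ext fun x => by simp [algebraMap_smul]; rfl, LinearMap.rTensor_smul,
          LinearMap.rTensor_id]
        rfl }
  let eX : E →ₐ[k] Module.End k (X ⊗[k] E) :=
    { toFun := fun e => (LinearMap.mulLeft k e).lTensor X
      map_one' := by
        show (LinearMap.mulLeft k (1 : E)).lTensor X = 1
        rw [LinearMap.mulLeft_one, LinearMap.lTensor_id]; rfl
      map_mul' := fun e e' => by
        show (LinearMap.mulLeft k (e * e')).lTensor X =
          (LinearMap.mulLeft k e).lTensor X * (LinearMap.mulLeft k e').lTensor X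
        rw [LinearMap.mulLeft_mul, LinearMap.lTensor_comp]; rfl
      map_zero' := by
        show (LinearMap.mulLeft k (0 : E)).lTensor X = 0
        rw [LinearMap.mulLeft_zero_eq_zero, LinearMap.lTensor_zero]
      map_add' := fun e e' => by
        show (LinearMap.mulLeft k (e + e')).lTensor X =
          (LinearMap.mulLeft k e).lTensor X + (LinearMap.mulLeft k e').lTensor X
        rw [show LinearMap.mulLeft k (e + e') = LinearMap.mulLeft k e + LinearMap.mulLeft k e' from
          LinearMap.ext fun x => add_mul e e' x, LinearMap.lTensor_add]
      commutes' := fun c => by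
        show (LinearMap.mulLeft k (algebraMap k E c)).lTensor X =
          algebraMap k (Module.End k (X ⊗[k] E)) c
        rw [show LinearMap.mulLeft k (algebraMap k E c) = c • (LinearMap.id : E →ₗ[k] E) from
          LinearMap.ext fun x => by simp [← Algebra.smul_def], LinearMap.lTensor_smul,
          LinearMap.lTensor_id]
        rfl }
  have hcommX : ∀ (a : Λ) (e : E), Commute (aX a) (eX e) := fun a e => by
    show ((DistribMulAction.toLinearMap k X a).rTensor E).comp
        ((LinearMap.mulLeft k e).lTensor X) =
      ((LinearMap.mulLeft k e).lTensor X).comp ((DistribMulAction.toLinearMap k X a).rTensor E)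
    rw [LinearMap.rTensor_comp_lTensor, LinearMap.lTensor_comp_rTensor]
  let aY : Λ →ₐ[k] Module.End k (Y ⊗[k] E) :=
    { toFun := fun a => (DistribMulAction.toLinearMap k Y a).rTensor E
      map_one' := by
        show (DistribMulAction.toLinearMap k Y (1 : Λ)).rTensor E = 1
        rw [show DistribMulAction.toLinearMap k Y (1 : Λ) = LinearMap.id from
          LinearMap.ext fun x => one_smul Λ x, LinearMap.rTensor_id]; rfl
      map_mul' := fun a b => by
        show (DistribMulAction.toLinearMap k Y (a * b)).rTensor E =
          (DistribMulAction.toLinearMap k Y a).rTensor E *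
            (DistribMulAction.toLinearMap k Y b).rTensor E
        rw [show DistribMulAction.toLinearMap k Y (a * b) =
          (DistribMulAction.toLinearMap k Y a).comp (DistribMulAction.toLinearMap k Y b) from
          LinearMap.ext fun x => mul_smul a b x, LinearMap.rTensor_comp]; rfl
      map_zero' := by
        show (DistribMulAction.toLinearMap k Y (0 : Λ)).rTensor E = 0
        rw [show DistribMulAction.toLinearMap k Y (0 : Λ) = 0 from
          LinearMap.ext fun x => zero_smul Λ x, LinearMap.rTensor_zero]
      map_add' := fun a b => by
        show (DistribMulAction.toLinearMap k Y (a + b)).rTensor E =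
          (DistribMulAction.toLinearMap k Y a).rTensor E +
            (DistribMulAction.toLinearMap k Y b).rTensor E
        rw [show DistribMulAction.toLinearMap k Y (a + b) =
          DistribMulAction.toLinearMap k Y a + DistribMulAction.toLinearMap k Y b from
          LinearMap.ext fun x => add_smul a b x, LinearMap.rTensor_add]
      commutes' := fun c => by
        show (DistribMulAction.toLinearMap k Y (algebraMap k Λ c)).rTensor E =
          algebraMap k (Module.End k (Y ⊗[k] E)) c
        rw [show DistribMulAction.toLinearMap k Y (algebraMap k Λ c) =
          c • (LinearMap.id : Y →ₗ[k] Y) from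
          LinearMap.ext fun x => by simp [algebraMap_smul]; rfl, LinearMap.rTensor_smul,
          LinearMap.rTensor_id]
        rfl }
  let eY : E →ₐ[k] Module.End k (Y ⊗[k] E) :=
    { toFun := fun e => (LinearMap.mulLeft k e).lTensor Y
      map_one' := by
        show (LinearMap.mulLeft k (1 : E)).lTensor Y = 1
        rw [LinearMap.mulLeft_one, LinearMap.lTensor_id]; rfl
      map_mul' := fun e e' => by
        show (LinearMap.mulLeft k (e * e')).lTensor Y =
          (LinearMap.mulLeft k e).lTensor Y * (LinearMap.mulLeft k e').lTensor Y
        rw [LinearMap.mulLeft_mul, LinearMap.lTensor_comp]; rfl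
      map_zero' := by
        show (LinearMap.mulLeft k (0 : E)).lTensor Y = 0
        rw [LinearMap.mulLeft_zero_eq_zero, LinearMap.lTensor_zero]
      map_add' := fun e e' => by
        show (LinearMap.mulLeft k (e + e')).lTensor Y =
          (LinearMap.mulLeft k e).lTensor Y + (LinearMap.mulLeft k e').lTensor Y
        rw [show LinearMap.mulLeft k (e + e') = LinearMap.mulLeft k e + LinearMap.mulLeft k e' from
          LinearMap.ext fun x => add_mul e e' x, LinearMap.lTensor_add]
      commutes' := fun c => by
        show (LinearMap.mulLeft k (algebraMap k E c)).lTensor Y =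
          algebraMap k (Module.End k (Y ⊗[k] E)) c
        rw [show LinearMap.mulLeft k (algebraMap k E c) = c • (LinearMap.id : E →ₗ[k] E) from
          LinearMap.ext fun x => by simp [← Algebra.smul_def], LinearMap.lTensor_smul,
          LinearMap.lTensor_id]
        rfl }
  have hcommY : ∀ (a : Λ) (e : E), Commute (aY a) (eY e) := fun a e => by
    show ((DistribMulAction.toLinearMap k Y a).rTensor E).comp
        ((LinearMap.mulLeft k e).lTensor Y) =
      ((LinearMap.mulLeft k e).lTensor Y).comp ((DistribMulAction.toLinearMap k Y a).rTensor E)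
    rw [LinearMap.rTensor_comp_lTensor, LinearMap.lTensor_comp_rTensor]
  let ψX : (Λ ⊗[k] E) →ₐ[k] Module.End k (X ⊗[k] E) := Algebra.TensorProduct.lift aX eX hcommX
  let ψY : (Λ ⊗[k] E) →ₐ[k] Module.End k (Y ⊗[k] E) := Algebra.TensorProduct.lift aY eY hcommY
  letI mBX : Module (Λ ⊗[k] E) (X ⊗[k] E) := Module.compHom _ ψX.toRingHom
  letI mBY : Module (Λ ⊗[k] E) (Y ⊗[k] E) := Module.compHom _ ψY.toRingHom
  have smulX : ∀ (a : Λ) (ε : E) (x : X) (e : E),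
      (a ⊗ₜ[k] ε : Λ ⊗[k] E) • (x ⊗ₜ[k] e : X ⊗[k] E) = (a • x) ⊗ₜ[k] (ε * e) := by
    intro a ε x e
    show ψX (a ⊗ₜ ε) (x ⊗ₜ e) = _
    rw [Algebra.TensorProduct.lift_tmul]
    rfl
  have smulY : ∀ (a : Λ) (ε : E) (y : Y) (e : E),
      (a ⊗ₜ[k] ε : Λ ⊗[k] E) • (y ⊗ₜ[k] e : Y ⊗[k] E) = (a • y) ⊗ₜ[k] (ε * e) := by
    intro a ε y e
    show ψY (a ⊗ₜ ε) (y ⊗ₜ e) = _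
    rw [Algebra.TensorProduct.lift_tmul]
    rfl
  let fk : X →ₗ[k] Y :=
    { toFun := f
      map_add' := f.map_add
      map_smul' := fun c x => by
        show f ((algebraMap k Λ c) • x) = (algebraMap k Λ c) • f x
        rw [f.map_smul] }
  let iB : (X ⊗[k] E) →ₗ[Λ ⊗[k] E] (Y ⊗[k] E) :=
    { toFun := fk.rTensor E
      map_add' := (fk.rTensor E).map_add
      map_smul' := fun w z => by
        show fk.rTensor E (w • z) = w • fk.rTensor E z
        induction w using TensorProduct.induction_on with
        | zero => rw [zero_smul, map_zero, zero_smul]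
        | tmul a ε =>
          induction z using TensorProduct.induction_on with
          | zero => rw [smul_zero, map_zero, smul_zero]
          | tmul x e =>
            rw [smulX, LinearMap.rTensor_tmul, LinearMap.rTensor_tmul, smulY]
            show (f (a • x)) ⊗ₜ[k] (ε * e) = (a • f x) ⊗ₜ[k] (ε * e)
            rw [f.map_smul]
          | add z₁ z₂ h₁ h₂ => rw [smul_add, map_add, h₁, h₂, map_add, smul_add]
        | add w₁ w₂ h₁ h₂ => rw [add_smul, map_add, h₁, h₂, add_smul] }
  have hiB : Function.Injective iB := by
    show Function.Injective (fk.rTensor E)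
    exact Module.Flat.rTensor_preserves_injective_linearMap fk hf
  let gk : X →ₗ[k] Λ :=
    { toFun := g
      map_add' := g.map_add
      map_smul' := fun c x => by
        show g ((algebraMap k Λ c) • x) = c • g x
        rw [g.map_smul, algebraMap_smul] }
  let gB : (X ⊗[k] E) →ₗ[Λ ⊗[k] E] (Λ ⊗[k] E) :=
    { toFun := gk.rTensor E
      map_add' := (gk.rTensor E).map_add
      map_smul' := fun w z => by
        show gk.rTensor E (w • z) = w * gk.rTensor E z
        induction w using TensorProduct.induction_on with
        | zero => rw [zero_smul, map_zero, zero_mul]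
        | tmul a ε =>
          induction z using TensorProduct.induction_on with
          | zero => rw [smul_zero, map_zero, mul_zero]
          | tmul x e =>
            rw [smulX, LinearMap.rTensor_tmul, LinearMap.rTensor_tmul,
              Algebra.TensorProduct.tmul_mul_tmul]
            show (g (a • x)) ⊗ₜ[k] (ε * e) = (a * g x) ⊗ₜ[k] (ε * e)
            rw [g.map_smul]; rfl
          | add z₁ z₂ h₁ h₂ => rw [smul_add, map_add, h₁, h₂, map_add, mul_add]
        | add w₁ w₂ h₁ h₂ => rw [add_smul, map_add, h₁, h₂, add_mul] }
  obtain ⟨hB, hhB⟩ := inj.out iB hiB gB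
  obtain ⟨φ, hφ⟩ := (Algebra.linearMap k E).exists_leftInverse_of_injective
    (LinearMap.ker_eq_bot.mpr (algebraMap k E).injective)
  have hφ1 : φ 1 = 1 := by
    have := congrArg (fun ψ => ψ (1 : k)) hφ
    simpa using this
  let π : (Λ ⊗[k] E) →ₗ[k] Λ := TensorProduct.lift
    { toFun := fun c => φ.smulRight c
      map_add' := fun c c' => LinearMap.ext fun e => smul_add (φ e) c c'
      map_smul' := fun κ c => LinearMap.ext fun e => smul_comm (φ e) κ c }
  have hπ : ∀ (a : Λ) (w : Λ ⊗[k] E), π ((a ⊗ₜ[k] (1 : E)) * w) = a • π w := by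
    intro a w
    induction w using TensorProduct.induction_on with
    | zero => rw [mul_zero, map_zero, smul_zero]
    | tmul c e =>
      rw [Algebra.TensorProduct.tmul_mul_tmul]
      show φ (1 * e) • (a * c) = a • (φ e • c)
      rw [one_mul, smul_eq_mul, mul_smul_comm]
    | add w₁ w₂ h₁ h₂ => rw [mul_add, map_add, h₁, h₂, map_add, smul_add]
  refine ⟨{ toFun := fun y => π (hB (y ⊗ₜ[k] (1 : E)))
            map_add' := fun y z => by
              show π (hB ((y + z) ⊗ₜ[k] (1 : E))) = _
              rw [TensorProduct.add_tmul, map_add, map_add]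
            map_smul' := fun a y => by
              show π (hB ((a • y) ⊗ₜ[k] (1 : E))) = a • π (hB (y ⊗ₜ[k] (1 : E)))
              have h1 : ((a • y) ⊗ₜ[k] (1 : E)) =
                  (a ⊗ₜ[k] (1 : E) : Λ ⊗[k] E) • (y ⊗ₜ[k] (1 : E)) := by
                rw [smulY, mul_one]
              rw [h1, hB.map_smul]
              exact hπ a _ },
        fun x => ?_⟩
  show π (hB (iB (x ⊗ₜ[k] (1 : E)))) = g x
  rw [hhB]
  show π ((g x) ⊗ₜ[k] (1 : E)) = g x
  show φ 1 • g x = g x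
  rw [hφ1, one_smul]


section Bridge
variable (k E Λ : Type) [Field k] [Field E] [Algebra k E] [Ring Λ] [Algebra k Λ]

attribute [local instance] Algebra.TensorProduct.rightAlgebra

lemma rsmul_tmul (e : E) (x : Λ) (e' : E) :
    e • (x ⊗ₜ[k] e' : Λ ⊗[k] E) = x ⊗ₜ[k] (e * e') := by
  rw [Algebra.smul_def]
  show ((1 : Λ) ⊗ₜ[k] e) * (x ⊗ₜ[k] e') = _
  rw [Algebra.TensorProduct.tmul_mul_tmul, one_mul]

lemma mapE_ksmul (g : (Λ ⊗[k] E) →ₗ[E] E) (κ : k) (u : Λ ⊗[k] E) :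
    g (κ • u) = κ • g u := by
  induction u using TensorProduct.induction_on with
  | zero => rw [smul_zero, map_zero, smul_zero]
  | tmul x e =>
    rw [← TensorProduct.tmul_smul, Algebra.smul_def κ e, ← rsmul_tmul k E Λ, g.map_smul,
      algebraMap_smul]
  | add u v hu hv => rw [smul_add, map_add, hu, hv, map_add, smul_add]

def toE0 (f : Λ →ₗ[k] k) : (Λ ⊗[k] E) →ₗ[k] E :=
  (TensorProduct.lid k E).toLinearMap ∘ₗ TensorProduct.map f LinearMap.id

lemma toE0_tmul (f : Λ →ₗ[k] k) (x : Λ) (e : E) :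
    toE0 k E Λ f (x ⊗ₜ[k] e) = f x • e := by
  simp [toE0]

def toE (f : Λ →ₗ[k] k) : (Λ ⊗[k] E) →ₗ[E] E where
  toFun := toE0 k E Λ f
  map_add' := (toE0 k E Λ f).map_add
  map_smul' := fun e z => by
    show toE0 k E Λ f (e • z) = e • toE0 k E Λ f z
    induction z using TensorProduct.induction_on with
    | zero => rw [smul_zero, map_zero, smul_zero]
    | tmul x e' =>
      rw [rsmul_tmul k E Λ, toE0_tmul k E Λ, toE0_tmul k E Λ, smul_eq_mul, mul_smul_comm]
    | add z w hz hw => rw [smul_add, map_add, hz, hw, map_add, smul_add]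

lemma toE_tmul (f : Λ →ₗ[k] k) (x : Λ) (e : E) :
    toE k E Λ f (x ⊗ₜ[k] e) = f x • e := toE0_tmul k E Λ f x e

lemma extE {g h : (Λ ⊗[k] E) →ₗ[E] E}
    (H : ∀ x e, g (x ⊗ₜ[k] e) = h (x ⊗ₜ[k] e)) : g = h :=
  LinearMap.ext fun z => by
    induction z using TensorProduct.induction_on with
    | zero => rw [map_zero, map_zero]
    | tmul x e => exact H x e
    | add a b ha hb => rw [map_add, map_add, ha, hb]

lemma toE_add (f f' : Λ →ₗ[k] k) : toE k E Λ (f + f') = toE k E Λ f + toE k E Λ f' :=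
  extE k E Λ fun x e => by
    rw [toE_tmul, LinearMap.add_apply, LinearMap.add_apply, toE_tmul, toE_tmul, add_smul]

lemma toE_ksmul (κ : k) (f : Λ →ₗ[k] k) : toE k E Λ (κ • f) = κ • toE k E Λ f :=
  extE k E Λ fun x e => by
    rw [toE_tmul, LinearMap.smul_apply, LinearMap.smul_apply, toE_tmul, smul_eq_mul, mul_smul]

def fromCbil (c : Λ →ₗ[Λ] Coind k Λ) : Λ →ₗ[k] E →ₗ[k] ((Λ ⊗[k] E) →ₗ[E] E) where
  toFun x :=
    { toFun := fun e => e • toE k E Λ (Coind.toLin (c x))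
      map_add' := fun e e' => add_smul e e' _
      map_smul' := fun κ e => smul_assoc κ e _ }
  map_add' x y := LinearMap.ext fun e => by
    show e • toE k E Λ (Coind.toLin (c (x + y))) =
      e • toE k E Λ (Coind.toLin (c x)) + e • toE k E Λ (Coind.toLin (c y))
    rw [c.map_add, Coind.toLin_add, toE_add, smul_add]
  map_smul' κ x := LinearMap.ext fun e => by
    show e • toE k E Λ (Coind.toLin (c (κ • x))) =
      κ • (e • toE k E Λ (Coind.toLin (c x)))
    rw [show (κ • x : Λ) = (algebraMap k Λ κ) • x from (algebraMap_smul Λ κ x).symm,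
      c.map_smul, Coind.toLin_algsmul, toE_ksmul, smul_comm]

lemma fromC_mul (c : Λ →ₗ[Λ] Coind k Λ) (w z u : Λ ⊗[k] E) :
    TensorProduct.lift (fromCbil k E Λ c) (w * z) u
      = TensorProduct.lift (fromCbil k E Λ c) z (u * w) := by
  induction w using TensorProduct.induction_on with
  | zero => simp
  | tmul a ε =>
    induction z using TensorProduct.induction_on with
    | zero => simp
    | tmul x e =>
      induction u using TensorProduct.induction_on with
      | zero => simp
      | tmul x' e'' =>
        rw [Algebra.TensorProduct.tmul_mul_tmul, Algebra.TensorProduct.tmul_mul_tmul,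
          TensorProduct.lift.tmul, TensorProduct.lift.tmul]
        show ((ε * e) • toE k E Λ (Coind.toLin (c (a * x)))) (x' ⊗ₜ[k] e'') =
          (e • toE k E Λ (Coind.toLin (c x))) ((x' * a) ⊗ₜ[k] (e'' * ε))
        rw [LinearMap.smul_apply, LinearMap.smul_apply, toE_tmul, toE_tmul,
          show (a * x : Λ) = a • x from rfl, c.map_smul, Coind.smul_ap]
        rw [smul_eq_mul, smul_eq_mul, mul_smul_comm, mul_smul_comm]
        congr 1
        ring
      | add u₁ u₂ h₁ h₂ =>
        simp only [map_add, LinearMap.add_apply, add_mul] at h₁ h₂ ⊢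
        rw [h₁, h₂]
    | add z₁ z₂ h₁ h₂ =>
      simp only [mul_add, map_add, LinearMap.add_apply] at h₁ h₂ ⊢
      rw [h₁, h₂]
  | add w₁ w₂ h₁ h₂ =>
    simp only [add_mul, mul_add, map_add, LinearMap.add_apply] at h₁ h₂ ⊢
    rw [h₁, h₂]

def fromC (c : Λ →ₗ[Λ] Coind k Λ) :
    (Λ ⊗[k] E) →ₗ[Λ ⊗[k] E] Coind E (Λ ⊗[k] E) where
  toFun z := Coind.mk' (TensorProduct.lift (fromCbil k E Λ c) z)
  map_add' z z' := by
    ext u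
    show TensorProduct.lift (fromCbil k E Λ c) (z + z') u = _
    rw [map_add, LinearMap.add_apply]
    rfl
  map_smul' w z := by
    ext u
    show TensorProduct.lift (fromCbil k E Λ c) (w • z) u
      = Coind.toLin (w • Coind.mk' (TensorProduct.lift (fromCbil k E Λ c) z)) u
    rw [Coind.smul_ap, Coind.toLin_mk', smul_eq_mul]
    exact fromC_mul k E Λ c w z u

lemma fromC_tmul (c : Λ →ₗ[Λ] Coind k Λ) (x : Λ) (e : E) :
    Coind.toLin (fromC k E Λ c (x ⊗ₜ[k] e)) = e • toE k E Λ (Coind.toLin (c x)) := by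
  show TensorProduct.lift (fromCbil k E Λ c) (x ⊗ₜ[k] e) = _
  rw [TensorProduct.lift.tmul]
  rfl

lemma dual_shift {m : ℕ} (bs : Module.Basis (Fin m) k Λ) (a : Λ) (l : Fin m) :
    (a • Coind.mk' (bs.coord l) : Coind k Λ)
      = ∑ i, algebraMap k Λ (bs.repr (bs i * a) l) • Coind.mk' (bs.coord i) := by
  ext x'
  rw [Coind.smul_ap, Coind.toLin_mk', Coind.toLin_sum, LinearMap.sum_apply]
  have hx : x' * a = ∑ i, bs.repr x' i • (bs i * a) := by
    conv_lhs => rw [← bs.sum_repr x']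
    rw [Finset.sum_mul]
    exact Finset.sum_congr rfl fun i _ => smul_mul_assoc _ _ _
  rw [Module.Basis.coord_apply, hx, map_sum, Finsupp.finset_sum_apply]
  refine Finset.sum_congr rfl fun i _ => ?_
  rw [map_smul, Finsupp.smul_apply, smul_eq_mul, Coind.toLin_algsmul, LinearMap.smul_apply,
    Coind.toLin_mk', Module.Basis.coord_apply, smul_eq_mul, mul_comm]

lemma toB_key {m : ℕ} (bs : Module.Basis (Fin m) k Λ) (r : Coind k Λ →ₗ[Λ] Λ)
    (g : Coind E (Λ ⊗[k] E)) (a : Λ) (ε : E) :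
    ∑ i, r (Coind.mk' (bs.coord i)) ⊗ₜ[k]
        (Coind.toLin g (((bs i) ⊗ₜ[k] (1 : E)) * (a ⊗ₜ[k] ε)))
      = (a ⊗ₜ[k] ε) * ∑ i, r (Coind.mk' (bs.coord i)) ⊗ₜ[k]
        (Coind.toLin g ((bs i) ⊗ₜ[k] (1 : E))) := by
  set G := Coind.toLin g with hGdef
  have hG : ∀ t : Λ, G (t ⊗ₜ[k] ε) = ε • G (t ⊗ₜ[k] (1 : E)) := fun t => by
    rw [show (t ⊗ₜ[k] ε : Λ ⊗[k] E) = ε • (t ⊗ₜ[k] (1 : E)) from by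
      rw [rsmul_tmul k E Λ, mul_one], G.map_smul]
  have hexp : ∀ t : Λ, G (t ⊗ₜ[k] (1 : E))
      = ∑ l, bs.repr t l • G ((bs l) ⊗ₜ[k] (1 : E)) := fun t => by
    conv_lhs => rw [← bs.sum_repr t]
    rw [TensorProduct.sum_tmul, map_sum]
    exact Finset.sum_congr rfl fun l _ => by rw [← TensorProduct.smul_tmul', mapE_ksmul k E Λ]
  calc
    ∑ i, r (Coind.mk' (bs.coord i)) ⊗ₜ[k] (G (((bs i) ⊗ₜ[k] (1 : E)) * (a ⊗ₜ[k] ε)))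
        = ∑ i, ∑ l, bs.repr (bs i * a) l •
            (r (Coind.mk' (bs.coord i)) ⊗ₜ[k] (ε • G ((bs l) ⊗ₜ[k] (1 : E)))) := by
      refine Finset.sum_congr rfl fun i _ => ?_
      rw [Algebra.TensorProduct.tmul_mul_tmul, one_mul, hG, hexp, Finset.smul_sum,
        TensorProduct.tmul_sum]
      refine Finset.sum_congr rfl fun l _ => ?_
      rw [smul_comm ε (bs.repr (bs i * a) l), TensorProduct.tmul_smul]
    _ = ∑ l, ∑ i, bs.repr (bs i * a) l •
            (r (Coind.mk' (bs.coord i)) ⊗ₜ[k] (ε • G ((bs l) ⊗ₜ[k] (1 : E)))) :=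
      Finset.sum_comm
    _ = (a ⊗ₜ[k] ε) * ∑ i, r (Coind.mk' (bs.coord i)) ⊗ₜ[k] (G ((bs i) ⊗ₜ[k] (1 : E))) := by
      rw [Finset.mul_sum]
      refine (Finset.sum_congr rfl fun l _ => ?_).symm
      rw [Algebra.TensorProduct.tmul_mul_tmul,
        show (a * r (Coind.mk' (bs.coord l)) : Λ) = r (a • Coind.mk' (bs.coord l)) from by
          rw [r.map_smul, smul_eq_mul],
        dual_shift k Λ bs, map_sum, TensorProduct.sum_tmul]
      refine Finset.sum_congr rfl fun i _ => ?_
      rw [r.map_smul, smul_eq_mul, ← Algebra.smul_def, TensorProduct.smul_tmul',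
        show (ε * G ((bs l) ⊗ₜ[k] (1 : E)) : E) = ε • G ((bs l) ⊗ₜ[k] (1 : E)) from rfl]

def toB {m : ℕ} (bs : Module.Basis (Fin m) k Λ) (r : Coind k Λ →ₗ[Λ] Λ) :
    Coind E (Λ ⊗[k] E) →ₗ[Λ ⊗[k] E] (Λ ⊗[k] E) where
  toFun g := ∑ i, r (Coind.mk' (bs.coord i)) ⊗ₜ[k] (Coind.toLin g ((bs i) ⊗ₜ[k] (1 : E)))
  map_add' g h := by
    show (∑ i, _) = _
    rw [← Finset.sum_add_distrib]
    refine Finset.sum_congr rfl fun i _ => ?_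
    rw [Coind.toLin_add, LinearMap.add_apply, TensorProduct.tmul_add]
  map_smul' w g := by
    show (∑ i, r (Coind.mk' (bs.coord i)) ⊗ₜ[k]
        (Coind.toLin (w • g) ((bs i) ⊗ₜ[k] (1 : E))))
      = w • ∑ i, r (Coind.mk' (bs.coord i)) ⊗ₜ[k] (Coind.toLin g ((bs i) ⊗ₜ[k] (1 : E)))
    rw [smul_eq_mul]
    simp only [Coind.smul_ap]
    induction w using TensorProduct.induction_on with
    | zero => simp
    | tmul a ε => exact toB_key k E Λ bs r g a ε
    | add w₁ w₂ h₁ h₂ =>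
      simp only [mul_add, map_add, TensorProduct.tmul_add, add_mul] at h₁ h₂ ⊢
      rw [Finset.sum_add_distrib, h₁, h₂]

lemma repr_dual {m : ℕ} (bs : Module.Basis (Fin m) k Λ) (r : Coind k Λ →ₗ[Λ] Λ)
    (f : Coind k Λ) :
    ∑ i, (Coind.toLin f) (bs i) • r (Coind.mk' (bs.coord i)) = r f := by
  have h1 : ∀ i, (Coind.toLin f) (bs i) • r (Coind.mk' (bs.coord i))
      = r (algebraMap k Λ ((Coind.toLin f) (bs i)) • Coind.mk' (bs.coord i)) := fun i => by
    rw [r.map_smul, smul_eq_mul, ← Algebra.smul_def]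
  simp only [h1]
  rw [← map_sum]
  congr 1
  ext x'
  rw [Coind.toLin_sum, LinearMap.sum_apply]
  have : ∀ i, Coind.toLin (algebraMap k Λ ((Coind.toLin f) (bs i)) •
      Coind.mk' (bs.coord i)) x' = bs.repr x' i • (Coind.toLin f) (bs i) := fun i => by
    rw [Coind.toLin_algsmul, LinearMap.smul_apply, Coind.toLin_mk', Module.Basis.coord_apply,
      smul_eq_mul, smul_eq_mul, mul_comm]
  simp only [this]
  calc ∑ i, bs.repr x' i • (Coind.toLin f) (bs i)
      = (Coind.toLin f) (∑ i, bs.repr x' i • bs i) := by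
        rw [map_sum]
        exact Finset.sum_congr rfl fun i _ => ((Coind.toLin f).map_smul _ _).symm
    _ = (Coind.toLin f) x' := by rw [bs.sum_repr]

theorem injective_up' [FiniteDimensional k Λ] (inj : Module.Injective Λ Λ) :
    Module.Injective (Λ ⊗[k] E) (Λ ⊗[k] E) := by
  classical
  obtain ⟨n, ι, ρ, hρι⟩ := exists_summand (F := k) (B := Λ) inj
  let bs := Module.finBasis k Λ
  let ι' : (Λ ⊗[k] E) →ₗ[Λ ⊗[k] E] (Fin n → Coind E (Λ ⊗[k] E)) :=
    LinearMap.pi fun j => fromC k E Λ ((LinearMap.proj j) ∘ₗ ι)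
  let ρ' : (Fin n → Coind E (Λ ⊗[k] E)) →ₗ[Λ ⊗[k] E] (Λ ⊗[k] E) :=
    ∑ j, (toB k E Λ bs (ρ ∘ₗ LinearMap.single Λ (fun _ : Fin n => Coind k Λ) j)) ∘ₗ (LinearMap.proj j)
  refine injective_of_summand ι' ρ' fun z => ?_
  induction z using TensorProduct.induction_on with
  | zero => simp
  | tmul x e =>
    have hcomp : ∀ j : Fin n, (toB k E Λ bs (ρ ∘ₗ LinearMap.single Λ (fun _ : Fin n => Coind k Λ) j))
        (fromC k E Λ ((LinearMap.proj j) ∘ₗ ι) (x ⊗ₜ[k] e))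
        = (ρ (LinearMap.single Λ (fun _ : Fin n => Coind k Λ) j (ι x j))) ⊗ₜ[k] e := by
      intro j
      show (∑ i, (ρ ∘ₗ LinearMap.single Λ (fun _ : Fin n => Coind k Λ) j) (Coind.mk' (bs.coord i)) ⊗ₜ[k]
        (Coind.toLin (fromC k E Λ ((LinearMap.proj j) ∘ₗ ι) (x ⊗ₜ[k] e))
          ((bs i) ⊗ₜ[k] (1 : E)))) = _
      simp only [fromC_tmul]
      have hval : ∀ i, (e • toE k E Λ (Coind.toLin (((LinearMap.proj j) ∘ₗ ι) x)))
          ((bs i) ⊗ₜ[k] (1 : E))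
          = (Coind.toLin (ι x j)) (bs i) • e := fun i => by
        rw [LinearMap.smul_apply, toE_tmul]
        show e • ((Coind.toLin (ι x j)) (bs i) • (1 : E)) = _
        rw [smul_comm, smul_eq_mul, mul_one]
      simp only [hval]
      have : ∀ i, (ρ ∘ₗ LinearMap.single Λ (fun _ : Fin n => Coind k Λ) j) (Coind.mk' (bs.coord i)) ⊗ₜ[k]
          ((Coind.toLin (ι x j)) (bs i) • e)
          = ((Coind.toLin (ι x j)) (bs i) •
              (ρ ∘ₗ LinearMap.single Λ (fun _ : Fin n => Coind k Λ) j) (Coind.mk' (bs.coord i))) ⊗ₜ[k] e := fun i => by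
        rw [TensorProduct.tmul_smul, TensorProduct.smul_tmul']
      simp only [this]
      rw [← TensorProduct.sum_tmul]
      congr 1
      exact repr_dual k Λ bs (ρ ∘ₗ LinearMap.single Λ (fun _ : Fin n => Coind k Λ) j) (ι x j)
    show (∑ j, (toB k E Λ bs (ρ ∘ₗ LinearMap.single Λ (fun _ : Fin n => Coind k Λ) j)) ∘ₗ
        (LinearMap.proj (R := Λ ⊗[k] E) (φ := fun _ : Fin n => Coind E (Λ ⊗[k] E)) j))
        (ι' (x ⊗ₜ[k] e)) = x ⊗ₜ[k] e
    rw [LinearMap.sum_apply]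
    have : ∀ j : Fin n, ((toB k E Λ bs (ρ ∘ₗ LinearMap.single Λ (fun _ : Fin n => Coind k Λ) j)) ∘ₗ
        (LinearMap.proj (R := Λ ⊗[k] E) (φ := fun _ : Fin n => Coind E (Λ ⊗[k] E)) j))
        (ι' (x ⊗ₜ[k] e)) = (ρ (LinearMap.single Λ (fun _ : Fin n => Coind k Λ) j (ι x j))) ⊗ₜ[k] e := fun j => by
      rw [LinearMap.comp_apply]
      have : (LinearMap.proj (R := Λ ⊗[k] E) (φ := fun _ : Fin n => Coind E (Λ ⊗[k] E)) j)
          (ι' (x ⊗ₜ[k] e))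
          = fromC k E Λ ((LinearMap.proj j) ∘ₗ ι) (x ⊗ₜ[k] e) := rfl
      rw [this, hcomp j]
    simp only [this]
    rw [← TensorProduct.sum_tmul, ← map_sum]
    have : (∑ j, LinearMap.single Λ (fun _ : Fin n => Coind k Λ) j (ι x j)) = ι x := by
      funext i
      rw [Finset.sum_apply]
      exact Fintype.sum_pi_single i fun j => ι x j
    rw [this, hρι]
  | add z₁ z₂ h₁ h₂ => rw [map_add, map_add, h₁, h₂]

end Bridge

end

/-- Let `Λ` be a finite-dimensional algebra over a field `k` and `E/k` a
field extension.  Then `Λ` is self-injective (injective as a left module over itself) if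
and only if the `E`-algebra `Λ ⊗_k E` is self-injective. -/
theorem selfInjective_iff_selfInjective_tensor (k E Λ : Type) [Field k] [Field E]
    [Algebra k E] [Ring Λ] [Algebra k Λ] [FiniteDimensional k Λ] :
    Module.Injective Λ Λ ↔ Module.Injective (Λ ⊗[k] E) (Λ ⊗[k] E) := by
  constructor
  · exact injective_up' k E Λ
  · exact injective_down
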